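/- There is no orthonormal basis {|a⟩, |a^⊥⟩} of Alice's qubit ℂ² such that, writing each of the three states |00⟩+|11⟩, |00⟩−|11⟩, |01⟩−|10⟩ of ℂ² ⊗ ℂ² as |a⟩|η_i⟩ + |a^⊥⟩|ν_i⟩, the Bob-side vectors satisfy ⟨η_i|η_j⟩ = 0 and ⟨ν_i|ν_j⟩ = 0 for all i ≠ j. -/

import Mathlib

noncomputable section

def dot {n : Type*} [Fintype n] (v w : n → ℂ) : ℂ := ∑ p, star (v p) * w p

def k (i j : Fin 2) : Fin 2 × Fin 2 → ℂ := fun p => if p = (i, j) then 1 else 0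

/-- The three states |00⟩+|11⟩, |00⟩−|11⟩, |01⟩−|10⟩. -/
def w : Fin 3 → (Fin 2 × Fin 2 → ℂ) := ![k 0 0 + k 1 1, k 0 0 - k 1 1, k 0 1 - k 1 0]

/-- The Walgate–Hardy condition fails for the three states: there is no orthonormal basis
{|a⟩, |a⊥⟩} of Alice's qubit such that writing each state as |a⟩|η_i⟩ + |a⊥⟩|ν_i⟩ the
{η_i} are pairwise orthogonal and the {ν_i} are pairwise orthogonal. -/
theorem stmt19 :
    ¬ ∃ a aperp : Fin 2 → ℂ,
      dot a a = 1 ∧ dot aperp aperp = 1 ∧ dot a aperp = 0 ∧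
      ∃ η ν : Fin 3 → (Fin 2 → ℂ),
        (∀ i, w i = fun p => a p.1 * η i p.2 + aperp p.1 * ν i p.2) ∧
        (∀ i j, i ≠ j → dot (η i) (η j) = 0) ∧
        (∀ i j, i ≠ j → dot (ν i) (ν j) = 0) := by
  rintro ⟨a, b, ha, hb, hab, η, ν, h, hη, hν⟩
  simp only [dot, Fin.sum_univ_two] at ha hab
  have key : ∀ i q, star (a 0) * w i (0, q) + star (a 1) * w i (1, q) = η i q := by
    intro i q
    have h0 := congrFun (h i) (0, q)
    have h1 := congrFun (h i) (1, q)
    simp only at h0 h1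
    rw [h0, h1]
    linear_combination (η i q) * ha + (ν i q) * hab
  have e00 := key 0 0
  have e01 := key 0 1
  have e10 := key 1 0
  have e11 := key 1 1
  have e20 := key 2 0
  have e21 := key 2 1
  norm_num [w, k, Prod.ext_iff, Matrix.cons_val_two, Matrix.tail_cons, Matrix.head_cons] at e00 e01 e10 e11 e20 e21
  have o01 := hη 0 1 (by decide)
  have o02 := hη 0 2 (by decide)
  have o12 := hη 1 2 (by decide)
  simp only [dot, Fin.sum_univ_two, ← e00, ← e01, ← e10, ← e11, ← e20, ← e21,
    star_add, star_mul, star_star, star_neg, star_sub, star_one, star_zero,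
    starRingEnd_apply] at o01 o02 o12
  have h1 : a 0 * star (a 1) = 0 := by
    linear_combination (-(1:ℂ)/2) * o02 - (1/2 : ℂ) * o12
  have h2 : a 1 * star (a 0) = 0 := by
    linear_combination (1/2 : ℂ) * o02 - (1/2 : ℂ) * o12
  have h3 : star (a 0) * a 0 = 0 := by
    rcases mul_eq_zero.mp h1 with h | h
    · simp [h]
    · linear_combination o01 + (a 1) * h
  have h4 : star (a 1) * a 1 = 0 := by
    rw [← sub_eq_zero]
    linear_combination -o01 + h3
  rw [h3, h4] at ha
  norm_num at ha
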